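/- Let $U$ and $V$ be real Hilbert spaces, $B : U \to V'$ a bounded linear operator satisfying the bounded-below condition $\gamma \|u\|_U \leq \|B u\|_{V'}$ for some $\gamma > 0$ and all $u \in U$, let $\ell \in V'$, and let $U_h \subseteq U$ be a finite-dimensional subspace. Then there exists a unique minimizer $u_h \in U_h$ of $\|B u - \ell\|_{V'}$ over $U_h$, and if $u \in U$ satisfies $B u = \ell$, then $\|u - u_h\|_U \leq \frac{\|B\|}{\gamma} \inf_{w \in U_h} \|u - w\|_U$. -/

import Mathlib

set_option maxHeartbeats 1600000 in
/-- Quasi-optimality of the ideal minimum-residual (DPG) method: if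
`B : U → V'` is bounded below (`γ‖u‖ ≤ ‖Bu‖`), then over any finite-dimensional
subspace `U_h` the residual `‖B · − ℓ‖` has a unique minimizer `u_h`, and if
`B u = ℓ` then `‖u − u_h‖ ≤ (‖B‖/γ) inf_{w ∈ U_h} ‖u − w‖`. -/
theorem stmt19 {U V : Type*} [NormedAddCommGroup U] [InnerProductSpace ℝ U]
    [CompleteSpace U] [NormedAddCommGroup V] [InnerProductSpace ℝ V]
    [CompleteSpace V]
    (B : U →L[ℝ] StrongDual ℝ V) (γ : ℝ) (hγ : 0 < γ)
    (hbb : ∀ w : U, γ * ‖w‖ ≤ ‖B w‖)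
    (ℓ : StrongDual ℝ V) (Uh : Submodule ℝ U) [FiniteDimensional ℝ Uh]
    (u : U) (hu : B u = ℓ) :
    ∃ uh ∈ Uh, (∀ w ∈ Uh, ‖B uh - ℓ‖ ≤ ‖B w - ℓ‖) ∧
      (∀ uh' ∈ Uh, (∀ w ∈ Uh, ‖B uh' - ℓ‖ ≤ ‖B w - ℓ‖) → uh' = uh) ∧
      (∀ w ∈ Uh, ‖u - uh‖ ≤ (‖B‖ / γ) * ‖u - w‖) := by
  classical
  set T := (InnerProductSpace.toDual ℝ V).symm with hT
  set C : U →L[ℝ] V :=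
    (T.toContinuousLinearEquiv.toContinuousLinearMap).comp B with hC
  have hCval : ∀ w : U, C w = T (B w) := fun w => rfl
  have hnorm : ∀ w : U, ‖C w - T ℓ‖ = ‖B w - ℓ‖ := by
    intro w
    rw [hCval, ← map_sub, T.norm_map]
  have hCbb : ∀ w : U, γ * ‖w‖ ≤ ‖C w‖ := by
    intro w
    rw [hCval, T.norm_map]; exact hbb w
  set K : Submodule ℝ V := Uh.map (C : U →ₗ[ℝ] V) with hK
  haveI : FiniteDimensional ℝ K := Module.Finite.map _ _
  set y : V := T ℓ with hy
  set p : V := (K.orthogonalProjectionOnto y : V) with hp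
  have hpK : p ∈ K := (K.orthogonalProjectionOnto y).2
  have hyp : y - p ∈ Kᗮ := K.sub_starProjection_mem_orthogonal y
  have hmem : ∀ w ∈ Uh, C w ∈ K := fun w hw => Submodule.mem_map_of_mem hw
  have hpK' : ∃ uh ∈ Uh, C uh = p := by
    obtain ⟨uh, huh, h⟩ := hpK
    exact ⟨uh, huh, h⟩
  clear_value T C K y p
  clear hp hC hT hy hCval hK
  -- Pythagoras: for v ∈ K, ‖y - v‖^2 = ‖y - p‖^2 + ‖p - v‖^2
  have pyth : ∀ v ∈ K, ‖y - v‖ ^ 2 = ‖y - p‖ ^ 2 + ‖p - v‖ ^ 2 := by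
    intro v hv
    have horth : inner ℝ (y - p) (p - v) = (0 : ℝ) := by
      rw [real_inner_comm]
      exact hyp _ (K.sub_mem hpK hv)
    have hsplit : y - v = (y - p) + (p - v) := by abel
    rw [hsplit, norm_add_sq_real, horth]
    ring
  have hmin : ∀ v ∈ K, ‖y - p‖ ≤ ‖y - v‖ := by
    intro v hv
    nlinarith [pyth v hv, norm_nonneg (y - p), norm_nonneg (y - v), norm_nonneg (p - v),
      sq_nonneg (‖y - p‖ - ‖y - v‖)]
  obtain ⟨uh, huh, hCuh⟩ := hpK'
  refine ⟨uh, huh, ?_, ?_, ?_⟩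
  · intro w hw
    have h := hmin (C w) (hmem w hw)
    rw [← hnorm uh, ← hnorm w]
    calc ‖C uh - y‖ = ‖y - p‖ := by rw [hCuh, norm_sub_rev]
      _ ≤ ‖y - C w‖ := h
      _ = ‖C w - y‖ := norm_sub_rev _ _
  · intro uh' huh' hmin'
    have h2 : ‖y - p‖ ≤ ‖y - C uh'‖ := hmin _ (hmem uh' huh')
    have hple : ‖y - C uh'‖ ≤ ‖y - p‖ := by
      have h1 := hmin' uh huh
      rw [← hnorm uh', ← hnorm uh, hCuh] at h1
      calc ‖y - C uh'‖ = ‖C uh' - y‖ := by rw [norm_sub_rev]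
        _ ≤ ‖p - y‖ := h1
        _ = ‖y - p‖ := by rw [norm_sub_rev]
    have hsq := pyth (C uh') (hmem uh' huh')
    have hzero : ‖p - C uh'‖ = 0 := by
      nlinarith [norm_nonneg (p - C uh'), norm_nonneg (y - p), norm_nonneg (y - C uh')]
    have hCeq : C uh' = C uh := by
      have h0 : p - C uh' = 0 := norm_eq_zero.mp hzero
      rw [hCuh]; exact (sub_eq_zero.mp h0).symm
    have hle0 : γ * ‖uh' - uh‖ ≤ 0 := by
      have h := hCbb (uh' - uh)
      rwa [map_sub, hCeq, sub_self, norm_zero] at h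
    have hn0 : ‖uh' - uh‖ = 0 := by
      nlinarith [norm_nonneg (uh' - uh)]
    have h4 : uh' - uh = 0 := norm_eq_zero.mp hn0
    exact sub_eq_zero.mp h4
  · intro w hw
    have step1 : γ * ‖u - uh‖ ≤ ‖B uh - ℓ‖ := by
      calc γ * ‖u - uh‖ ≤ ‖B (u - uh)‖ := hbb _
        _ = ‖ℓ - B uh‖ := by rw [map_sub, hu]
        _ = ‖B uh - ℓ‖ := norm_sub_rev _ _
    have step2 : ‖B uh - ℓ‖ ≤ ‖B w - ℓ‖ := by
      have h := hmin (C w) (hmem w hw)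
      rw [← hnorm uh, ← hnorm w]
      calc ‖C uh - y‖ = ‖y - p‖ := by rw [hCuh, norm_sub_rev]
        _ ≤ ‖y - C w‖ := h
        _ = ‖C w - y‖ := norm_sub_rev _ _
    have step3 : ‖B w - ℓ‖ ≤ ‖B‖ * ‖u - w‖ := by
      calc ‖B w - ℓ‖ = ‖B w - B u‖ := by rw [hu]
        _ = ‖B (w - u)‖ := by rw [map_sub]
        _ ≤ ‖B‖ * ‖w - u‖ := B.le_opNorm _
        _ = ‖B‖ * ‖u - w‖ := by rw [norm_sub_rev]
    rw [div_mul_eq_mul_div, le_div_iff₀ hγ, mul_comm]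
    calc γ * ‖u - uh‖ ≤ ‖B w - ℓ‖ := le_trans step1 step2
      _ ≤ ‖B‖ * ‖u - w‖ := step3
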